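/- Let n ≥ 3 be odd, k ≥ 0, and 1 ≤ c < 2n(k+1)/(n-3) (no upper constraint on c when n = 3). The unicyclic graph G_{n,k,c}, consisting of an odd cycle on vertices a_1,...,a_n with k pendant vertices attached to each of a_1,...,a_{n-1} and k+c pendant vertices attached to a_n, is super edge-magic total and sm(G_{n,k,c}) = 2n(k+1) + 2c + (n+3)/2. -/

import Mathlib

/-- A super edge-magic total labeling of a graph `G` with `p = Fintype.card V` vertices and
`q = G.edgeSet.ncard` edges: `fv` maps the vertices bijectively onto `{1,…,p}`, `fe` maps the
edges bijectively onto `{p+1,…,p+q}` (so together they form a bijection of `V ∪ E` onto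
`{1,…,p+q}` with `f(V) = {1,…,p}`), and every edge `uv` satisfies `f(u)+f(v)+f(uv) = c`. -/
def IsSEMT {V : Type*} [Fintype V] (G : SimpleGraph V)
    (fv : V → ℕ) (fe : Sym2 V → ℕ) (c : ℕ) : Prop :=
  Set.BijOn fv Set.univ (Set.Icc 1 (Fintype.card V)) ∧
  Set.BijOn fe G.edgeSet
    (Set.Icc (Fintype.card V + 1) (Fintype.card V + G.edgeSet.ncard)) ∧
  ∀ u v, G.Adj u v → fv u + fv v + fe s(u, v) = c

/-- The unicyclic graph `G(n; k₁, …, kₙ)`: a cycle on `Fin n` (vertex `i` adjacent to `i+1 mod n`)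
with `k i` pendant vertices attached to the cycle vertex `i`. -/
def pendantCycle (n : ℕ) (k : Fin n → ℕ) :
    SimpleGraph (Fin n ⊕ Σ i : Fin n, Fin (k i)) :=
  SimpleGraph.fromRel (fun a b =>
    (∃ i j : Fin n, a = Sum.inl i ∧ b = Sum.inl j ∧ (i.val + 1) % n = j.val) ∨
    (∃ (i : Fin n) (j : Fin (k i)), a = Sum.inr ⟨i, j⟩ ∧ b = Sum.inl i))

namespace PCaux

def xlab (m a : ℕ) : ℕ := if a % 2 = 0 then a / 2 + 1 else m + 1 + (a + 1) / 2
def jfun (m x : ℕ) : ℕ := if m + 1 ≤ x then x - (m + 1) else x + m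

lemma xlab_mem {m a : ℕ} (ha : a ≤ 2*m) : 1 ≤ xlab m a ∧ xlab m a ≤ 2*m+1 := by
  unfold xlab; split <;> omega

lemma xlab_inj {m a b : ℕ} (ha : a ≤ 2*m) (hb : b ≤ 2*m) (h : xlab m a = xlab m b) : a = b := by
  unfold xlab at h; split at h <;> split at h <;> omega

lemma jfun_le {m x : ℕ} (h1 : 1 ≤ x) (h2 : x ≤ 2*m+1) : jfun m x ≤ 2*m := by
  unfold jfun; split <;> omega

lemma jfun_inj {m x y : ℕ} (hx1 : 1 ≤ x) (hx2 : x ≤ 2*m+1) (hy1 : 1 ≤ y) (hy2 : y ≤ 2*m+1)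
    (h : jfun m x = jfun m y) : x = y := by
  unfold jfun at h; split at h <;> split at h <;> omega

lemma sfun_mem {m x : ℕ} (h1 : 1 ≤ x) (h2 : x ≤ 2*m+1) :
    m + 1 ≤ x + jfun m x ∧ x + jfun m x ≤ 3*m+1 := by
  unfold jfun; split <;> omega

lemma sfun_inj {m x y : ℕ} (hx1 : 1 ≤ x) (hx2 : x ≤ 2*m+1) (hy1 : 1 ≤ y) (hy2 : y ≤ 2*m+1)
    (h : x + jfun m x = y + jfun m y) : x = y := by
  unfold jfun at h; split at h <;> split at h <;> omega

lemma no2cycle {n a b : ℕ} (hn : 3 ≤ n) (ha : a < n) (hb : b < n)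
    (h1 : (a+1) % n = b) (h2 : (b+1) % n = a) : False := by
  have e1 : (a+1) % n = if a+1 = n then 0 else a+1 := by
    split
    · simp [*]
    · exact Nat.mod_eq_of_lt (by omega)
  have e2 : (b+1) % n = if b+1 = n then 0 else b+1 := by
    split
    · simp [*]
    · exact Nat.mod_eq_of_lt (by omega)
  split at e1 <;> split at e2 <;> omega

lemma block_eq {n j j' r r' : ℕ} (hn : 0 < n) (hr : r < n) (hr' : r' < n)
    (h : n * j + r = n * j' + r') : j = j' ∧ r = r' := by
  have h1 : (n * j + r) / n = j := by
    rw [Nat.mul_add_div hn, Nat.div_eq_of_lt hr, Nat.add_zero]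
  have h2 : (n * j' + r') / n = j' := by
    rw [Nat.mul_add_div hn, Nat.div_eq_of_lt hr', Nat.add_zero]
  have hjj : j = j' := by rw [← h1, ← h2, h]
  subst hjj
  constructor
  · rfl
  · omega

lemma sum_distinct_ge : ∀ (N : ℕ) (S : Finset ℕ), S.card = N → (∀ x ∈ S, 1 ≤ x) →
    N * (N + 1) ≤ 2 * ∑ x ∈ S, x := by
  intro N
  induction N with
  | zero => intro S _ _; simp
  | succ t ih =>
    intro S hcard h
    have hne : S.Nonempty := Finset.card_pos.mp (by omega)
    set M := S.max' hne with hM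
    have hMS : M ∈ S := S.max'_mem hne
    have hMge : t + 1 ≤ M := by
      have hsub : S ⊆ Finset.Icc 1 M := fun x hx => Finset.mem_Icc.mpr ⟨h x hx, S.le_max' x hx⟩
      have := Finset.card_le_card hsub
      rw [Nat.card_Icc] at this; omega
    have hce : (S.erase M).card = t := by rw [Finset.card_erase_of_mem hMS, hcard]; omega
    have ihe := ih (S.erase M) hce (fun x hx => h x (Finset.mem_of_mem_erase hx))
    have hsum : ∑ x ∈ S, x = M + ∑ x ∈ S.erase M, x := (Finset.add_sum_erase S id hMS).symm
    nlinarith [ihe, hMge, hsum]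

lemma bijOn_nat {α : Type*} [Fintype α] (f : α → ℕ) (lo hi : ℕ)
    (hinj : Function.Injective f) (hmem : ∀ a, f a ∈ Finset.Icc lo hi)
    (hcard : Fintype.card α = hi + 1 - lo) :
    Set.BijOn f Set.univ (Set.Icc lo hi) := by
  have himage : Finset.univ.image f = Finset.Icc lo hi := by
    apply Finset.eq_of_subset_of_card_le
    · intro x hx
      obtain ⟨a, _, rfl⟩ := Finset.mem_image.mp hx
      exact hmem a
    · rw [Finset.card_image_of_injective _ hinj, Finset.card_univ, Nat.card_Icc, hcard]
  refine ⟨fun a _ => ?_, fun a _ b _ hab => hinj hab, fun x hx => ?_⟩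
  · rw [← Finset.coe_Icc, ← himage]
    exact Finset.mem_coe.mpr (Finset.mem_image_of_mem f (Finset.mem_univ a))
  · rw [← Finset.coe_Icc, ← himage] at hx
    obtain ⟨a, _, rfl⟩ := Finset.mem_image.mp (Finset.mem_coe.mp hx)
    exact ⟨a, Set.mem_univ a, rfl⟩

lemma bijOn_range {α β : Type*} (E : α → β) (f : β → ℕ) (T : Set ℕ)
    (h : Set.BijOn (f ∘ E) Set.univ T) : Set.BijOn f (Set.range E) T := by
  refine ⟨?_, ?_, ?_⟩
  · rintro x ⟨v, rfl⟩
    exact h.mapsTo (Set.mem_univ v)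
  · rintro x ⟨v, rfl⟩ y ⟨w, rfl⟩ hxy
    exact congrArg E (h.injOn (Set.mem_univ v) (Set.mem_univ w) hxy)
  · intro t ht
    obtain ⟨v, _, rfl⟩ := h.surjOn ht
    exact ⟨E v, ⟨v, rfl⟩, rfl⟩



-- graph part
abbrev Kf (n k c : ℕ) : Fin n → ℕ := fun i => if i.val = n - 1 then k + c else k
abbrev Vt (n k c : ℕ) := Fin n ⊕ Σ i : Fin n, Fin (Kf n k c i)

def fv (n k c m : ℕ) : Vt n k c → ℕ
  | .inl a => xlab m a.val
  | .inr ⟨i, j⟩ => if j.val < k then n * (j.val + 1) + jfun m (xlab m i.val) + 1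
                   else n * (k + 1) + (j.val - k) + 1

def Ei (n k c : ℕ) : Vt n k c → Sym2 (Vt n k c)
  | .inl a => s(Sum.inl a, Sum.inl ⟨(a.val + 1) % n, Nat.mod_lt _ a.pos⟩)
  | .inr ⟨i, j⟩ => s(Sum.inr ⟨i, j⟩, Sum.inl i)

def esum (n k c m : ℕ) : Vt n k c → ℕ
  | .inl a => if a.val = n - 1 then m + 2 else a.val + m + 3
  | .inr ⟨i, j⟩ => if j.val < k then n * (j.val + 1) + 1 + (xlab m i.val + jfun m (xlab m i.val))
                   else n * (k + 1) + m + 2 + (j.val - k)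

variable {n k c m : ℕ}

lemma pend_last {i : Fin n} (j : Fin (Kf n k c i)) (hj : k ≤ j.val) : i.val = n - 1 := by
  by_contra h
  have : Kf n k c i = k := if_neg h
  have := j.isLt
  omega

lemma fv_mem (hm : n = 2*m+1) (v : Vt n k c) :
    1 ≤ fv n k c m v ∧ fv n k c m v ≤ n*(k+1)+c := by
  have hnk : n * 1 ≤ n * (k+1) := Nat.mul_le_mul_left n (by omega)
  rcases v with a | ⟨i, j⟩
  · have ha := a.isLt
    have := xlab_mem (m := m) (a := a.val) (by omega)
    simp only [fv]
    omega
  · have hx := xlab_mem (m := m) (a := i.val) (by have := i.isLt; omega)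
    simp only [fv]
    split
    · rename_i hjk
      have hj := jfun_le hx.1 hx.2
      have h2 : n * (j.val + 2) ≤ n * (k+1) := Nat.mul_le_mul_left n (by omega)
      have h3 : n * (j.val + 2) = n * (j.val + 1) + n := by ring
      omega
    · rename_i hjk
      have hi : i.val = n - 1 := pend_last j (by omega)
      have hK : Kf n k c i = k + c := if_pos hi
      have hj := j.isLt
      omega

lemma fv_inj (hm : n = 2*m+1) : Function.Injective (fv n k c m) := by
  have hn1 : 1 ≤ n := by omega
  intro u v h
  rcases u with a | ⟨i, j⟩ <;> rcases v with b | ⟨i', j'⟩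
  · simp only [fv] at h
    have ha := a.isLt; have hb := b.isLt
    exact congrArg Sum.inl (Fin.ext (xlab_inj (by omega) (by omega) h))
  · exfalso
    simp only [fv] at h
    have ha := a.isLt
    have hx := xlab_mem (m := m) (a := a.val) (by omega)
    have hnk : n * 1 ≤ n * (k+1) := Nat.mul_le_mul_left n (by omega)
    split at h
    · have hnj : n * 1 ≤ n * (j'.val + 1) := Nat.mul_le_mul_left n (by omega)
      omega
    · omega
  · exfalso
    simp only [fv] at h
    have hb := b.isLt
    have hx := xlab_mem (m := m) (a := b.val) (by omega)
    have hnk : n * 1 ≤ n * (k+1) := Nat.mul_le_mul_left n (by omega)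
    split at h
    · have hnj : n * 1 ≤ n * (j.val + 1) := Nat.mul_le_mul_left n (by omega)
      omega
    · omega
  · simp only [fv] at h
    have hxi := xlab_mem (m := m) (a := i.val) (by have := i.isLt; omega)
    have hxi' := xlab_mem (m := m) (a := i'.val) (by have := i'.isLt; omega)
    have hji := jfun_le hxi.1 hxi.2
    have hji' := jfun_le hxi'.1 hxi'.2
    split at h <;> split at h
    · rename_i hjk hjk'
      have h' : n * (j.val + 1) + jfun m (xlab m i.val)
          = n * (j'.val + 1) + jfun m (xlab m i'.val) := by omega
      obtain ⟨h1, h2⟩ := block_eq (by omega) (by omega) (by omega) h'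
      have hii : i = i' := by
        apply Fin.ext
        apply xlab_inj (m := m) (by have := i.isLt; omega) (by have := i'.isLt; omega)
        exact jfun_inj hxi.1 hxi.2 hxi'.1 hxi'.2 h2
      subst hii
      have hjj : j = j' := Fin.ext (by omega)
      subst hjj
      rfl
    · exfalso
      rename_i hjk hjk'
      have h2 : n * (j.val + 1) ≤ n * k := Nat.mul_le_mul_left n (by omega)
      have h3 : n * (k + 1) = n * k + n := by ring
      omega
    · exfalso
      rename_i hjk hjk'
      have h2 : n * (j'.val + 1) ≤ n * k := Nat.mul_le_mul_left n (by omega)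
      have h3 : n * (k + 1) = n * k + n := by ring
      omega
    · rename_i hjk hjk'
      have hi : i.val = n - 1 := pend_last j (by omega)
      have hi' : i'.val = n - 1 := pend_last j' (by omega)
      have hii : i = i' := Fin.ext (by omega)
      subst hii
      have hjj : j = j' := Fin.ext (by
        have := hjk; have := hjk'
        generalize n * (k+1) = B at h
        omega)
      subst hjj
      rfl

lemma esum_mem (hm : n = 2*m+1) (hm1 : 1 ≤ m) (hc : 1 ≤ c) (v : Vt n k c) :
    m + 2 ≤ esum n k c m v ∧ esum n k c m v ≤ n*(k+1)+c+m+1 := by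
  have hnk : n * 1 ≤ n * (k+1) := Nat.mul_le_mul_left n (by omega)
  rcases v with a | ⟨i, j⟩
  · have ha := a.isLt
    simp only [esum]
    split <;> omega
  · have hx := xlab_mem (m := m) (a := i.val) (by have := i.isLt; omega)
    simp only [esum]
    split
    · rename_i hjk
      have hs := sfun_mem hx.1 hx.2
      have h2 : n * (j.val + 1) ≤ n * k := Nat.mul_le_mul_left n (by omega)
      have h3 : n * 1 ≤ n * (j.val + 1) := Nat.mul_le_mul_left n (by omega)
      have h4 : n * (k + 1) = n * k + n := by ring
      omega
    · rename_i hjk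
      have hi : i.val = n - 1 := pend_last j (by omega)
      have hK : Kf n k c i = k + c := if_pos hi
      have hj := j.isLt
      omega

lemma esum_inj (hm : n = 2*m+1) (hm1 : 1 ≤ m) : Function.Injective (esum n k c m) := by
  have hn1 : 1 ≤ n := by omega
  intro u v h
  rcases u with a | ⟨i, j⟩ <;> rcases v with b | ⟨i', j'⟩
  · simp only [esum] at h
    have ha := a.isLt; have hb := b.isLt
    split at h <;> split at h <;> exact congrArg Sum.inl (Fin.ext (by omega))
  · exfalso
    simp only [esum] at h
    have ha := a.isLt
    have hx := xlab_mem (m := m) (a := i'.val) (by have := i'.isLt; omega)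
    have hnk : n * 1 ≤ n * (k+1) := Nat.mul_le_mul_left n (by omega)
    split at h <;> split at h
    · have hs := sfun_mem hx.1 hx.2
      have h3 : n * 1 ≤ n * (j'.val + 1) := Nat.mul_le_mul_left n (by omega)
      omega
    · omega
    · have hs := sfun_mem hx.1 hx.2
      have h3 : n * 1 ≤ n * (j'.val + 1) := Nat.mul_le_mul_left n (by omega)
      omega
    · omega
  · exfalso
    simp only [esum] at h
    have hb := b.isLt
    have hx := xlab_mem (m := m) (a := i.val) (by have := i.isLt; omega)
    have hnk : n * 1 ≤ n * (k+1) := Nat.mul_le_mul_left n (by omega)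
    split at h <;> split at h
    · have hs := sfun_mem hx.1 hx.2
      have h3 : n * 1 ≤ n * (j.val + 1) := Nat.mul_le_mul_left n (by omega)
      omega
    · have hs := sfun_mem hx.1 hx.2
      have h3 : n * 1 ≤ n * (j.val + 1) := Nat.mul_le_mul_left n (by omega)
      omega
    · omega
    · omega
  · simp only [esum] at h
    have hxi := xlab_mem (m := m) (a := i.val) (by have := i.isLt; omega)
    have hxi' := xlab_mem (m := m) (a := i'.val) (by have := i'.isLt; omega)
    split at h <;> split at h
    · rename_i hjk hjk'
      have hsi := sfun_mem hxi.1 hxi.2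
      have hsi' := sfun_mem hxi'.1 hxi'.2
      have hjj : j.val = j'.val := by
        rcases lt_trichotomy j.val j'.val with hlt | heq | hgt
        · exfalso
          have h2 : n * (j.val + 2) ≤ n * (j'.val + 1) := Nat.mul_le_mul_left n (by omega)
          have h3 : n * (j.val + 2) = n * (j.val + 1) + n := by ring
          omega
        · exact heq
        · exfalso
          have h2 : n * (j'.val + 2) ≤ n * (j.val + 1) := Nat.mul_le_mul_left n (by omega)
          have h3 : n * (j'.val + 2) = n * (j'.val + 1) + n := by ring
          omega
      rw [hjj] at h
      have hss : xlab m i.val + jfun m (xlab m i.val)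
          = xlab m i'.val + jfun m (xlab m i'.val) := by
        generalize n * (j'.val + 1) = B at h
        omega
      have hii : i = i' := Fin.ext (xlab_inj (by have := i.isLt; omega) (by have := i'.isLt; omega)
        (sfun_inj hxi.1 hxi.2 hxi'.1 hxi'.2 hss))
      subst hii
      have : j = j' := Fin.ext hjj
      subst this
      rfl
    · exfalso
      rename_i hjk hjk'
      have hsi := sfun_mem hxi.1 hxi.2
      have h2 : n * (j.val + 1) ≤ n * k := Nat.mul_le_mul_left n (by omega)
      have h3 : n * (k + 1) = n * k + n := by ring
      omega
    · exfalso
      rename_i hjk hjk'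
      have hsi' := sfun_mem hxi'.1 hxi'.2
      have h2 : n * (j'.val + 1) ≤ n * k := Nat.mul_le_mul_left n (by omega)
      have h3 : n * (k + 1) = n * k + n := by ring
      omega
    · rename_i hjk hjk'
      have hi : i.val = n - 1 := pend_last j (by omega)
      have hi' : i'.val = n - 1 := pend_last j' (by omega)
      have hii : i = i' := Fin.ext (by omega)
      subst hii
      have hjj : j = j' := Fin.ext (by
        generalize n * (k+1) = B at h
        omega)
      subst hjj
      rfl


variable {n k c m : ℕ}

lemma Ei_inj (hn : 3 ≤ n) : Function.Injective (Ei n k c) := by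
  intro u v h
  rcases u with a | ⟨i, j⟩ <;> rcases v with b | ⟨i', j'⟩
  · simp only [Ei, Sym2.eq_iff] at h
    rcases h with ⟨h1, _⟩ | ⟨h1, h2⟩
    · rw [Sum.inl.injEq] at h1; rw [h1]
    · exfalso
      rw [Sum.inl.injEq] at h1 h2
      have ha := a.isLt; have hb := b.isLt
      have e1 : a.val = (b.val + 1) % n := congrArg Fin.val h1
      have e2 : (a.val + 1) % n = b.val := congrArg Fin.val h2
      exact no2cycle hn ha hb e2 e1.symm
  · exfalso; simp [Ei, Sym2.eq_iff] at h
  · exfalso; simp [Ei, Sym2.eq_iff] at h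
  · simp only [Ei, Sym2.eq_iff] at h
    rcases h with ⟨h1, _⟩ | ⟨h1, _⟩
    · rw [Sum.inr.injEq] at h1; rw [h1]
    · exact absurd h1 (by simp)

lemma adj_cyc (hn : 3 ≤ n) (a : Fin n) :
    (pendantCycle n (Kf n k c)).Adj (Sum.inl a) (Sum.inl ⟨(a.val + 1) % n, Nat.mod_lt _ a.pos⟩) := by
  rw [pendantCycle, SimpleGraph.fromRel_adj]
  constructor
  · intro he
    rw [Sum.inl.injEq] at he
    have := congrArg Fin.val he
    have ha := a.isLt
    simp only at this
    rcases Nat.lt_or_ge (a.val + 1) n with h | h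
    · rw [Nat.mod_eq_of_lt h] at this; omega
    · have hav : a.val + 1 = n := by omega
      rw [hav, Nat.mod_self] at this; omega
  · exact Or.inl (Or.inl ⟨a, ⟨(a.val + 1) % n, Nat.mod_lt _ a.pos⟩, rfl, rfl, rfl⟩)

lemma adj_pend (i : Fin n) (j : Fin (Kf n k c i)) :
    (pendantCycle n (Kf n k c)).Adj (Sum.inr ⟨i, j⟩) (Sum.inl i) := by
  rw [pendantCycle, SimpleGraph.fromRel_adj]
  exact ⟨by simp, Or.inl (Or.inr ⟨i, j, rfl, rfl⟩)⟩

lemma mem_edgeSet_Ei (hn : 3 ≤ n) (v : Vt n k c) :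
    Ei n k c v ∈ (pendantCycle n (Kf n k c)).edgeSet := by
  rcases v with a | ⟨i, j⟩
  · exact (SimpleGraph.mem_edgeSet _).mpr (adj_cyc hn a)
  · exact (SimpleGraph.mem_edgeSet _).mpr (adj_pend i j)

lemma range_Ei (hn : 3 ≤ n) :
    Set.range (Ei n k c) = (pendantCycle n (Kf n k c)).edgeSet := by
  apply Set.eq_of_subset_of_subset
  · rintro e ⟨v, rfl⟩
    exact mem_edgeSet_Ei hn v
  · intro e he
    induction e with
    | _ u v =>
      rw [SimpleGraph.mem_edgeSet, pendantCycle, SimpleGraph.fromRel_adj] at he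
      obtain ⟨hne, hrel⟩ := he
      rcases hrel with (⟨i, j', h1, h2, h3⟩ | ⟨i, j, h1, h2⟩) | (⟨i, j', h1, h2, h3⟩ | ⟨i, j, h1, h2⟩)
      · subst h1; subst h2
        refine ⟨Sum.inl i, ?_⟩
        show s(Sum.inl i, Sum.inl ⟨(i.val + 1) % n, Nat.mod_lt _ i.pos⟩) = s(Sum.inl i, Sum.inl j')
        congr 2
        exact Fin.ext h3
      · subst h1; subst h2
        exact ⟨Sum.inr ⟨i, j⟩, rfl⟩
      · subst h1; subst h2
        refine ⟨Sum.inl i, ?_⟩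
        show s(Sum.inl i, Sum.inl ⟨(i.val + 1) % n, Nat.mod_lt _ i.pos⟩) = s(Sum.inl j', Sum.inl i)
        rw [Sym2.eq_swap]
        congr 2
        exact Fin.ext h3
      · subst h1; subst h2
        exact ⟨Sum.inr ⟨i, j⟩, Sym2.eq_swap⟩

lemma card_Vt (hn : 1 ≤ n) : Fintype.card (Vt n k c) = n*(k+1)+c := by
  rw [Fintype.card_sum, Fintype.card_sigma, Fintype.card_fin]
  have h1 : ∀ i : Fin n, Fintype.card (Fin (Kf n k c i))
      = k + (if i = (⟨n-1, by omega⟩ : Fin n) then c else 0) := by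
    intro i
    rw [Fintype.card_fin]
    by_cases h : i.val = n-1
    · have hi : i = ⟨n-1, by omega⟩ := Fin.ext h
      simp [Kf, h, hi]
    · have hi : i ≠ ⟨n-1, by omega⟩ := fun he => h (by rw [he])
      simp [Kf, h, hi]
  rw [Finset.sum_congr rfl (fun i _ => h1 i), Finset.sum_add_distrib, Finset.sum_const,
    Finset.sum_ite_eq' Finset.univ]
  simp [Finset.card_univ, Nat.mul_add, Nat.mul_comm]
  ring

lemma esum_eq (hm : n = 2*m+1) (v : Vt n k c) :
    Sym2.lift ⟨fun u w => fv n k c m u + fv n k c m w, fun _ _ => by ring⟩ (Ei n k c v)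
      = esum n k c m v := by
  rcases v with a | ⟨i, j⟩
  · simp only [Ei, Sym2.lift_mk, fv, esum]
    have ha := a.isLt
    by_cases h : a.val = n - 1
    · have h0 : (a.val + 1) % n = 0 := by
        have : a.val + 1 = n := by omega
        rw [this, Nat.mod_self]
      rw [h0, if_pos h]
      have hx1 : xlab m a.val = m + 1 := by unfold xlab; split <;> omega
      have hx0 : xlab m 0 = 1 := by unfold xlab; norm_num
      rw [hx1, hx0]
    · have hlt : a.val + 1 < n := by omega
      rw [Nat.mod_eq_of_lt hlt, if_neg h]
      unfold xlab
      split <;> split <;> omega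
  · simp only [Ei, Sym2.lift_mk, fv, esum]
    by_cases hj : j.val < k
    · rw [if_pos hj, if_pos hj]
      have hx := i.isLt
      ring
    · rw [if_neg hj, if_neg hj]
      have hi : i.val = n - 1 := pend_last j (by omega)
      have hx : xlab m i.val = m + 1 := by rw [hi]; unfold xlab; split <;> omega
      rw [hx]
      generalize n * (k+1) = B
      omega

def fes (n k c m : ℕ) : Sym2 (Vt n k c) → ℕ :=
  fun e => 2*(n*(k+1)+c) + m + 2 -
    Sym2.lift ⟨fun u w => fv n k c m u + fv n k c m w, fun u w => Nat.add_comm _ _⟩ e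

variable {n k c m : ℕ}

lemma construction (hn3 : 3 ≤ n) (hm : n = 2*m+1) (hm1 : 1 ≤ m) (hc : 1 ≤ c) :
    IsSEMT (pendantCycle n (Kf n k c)) (fv n k c m) (fes n k c m)
      (2*(n*(k+1)+c) + m + 2) := by
  have hP : Fintype.card (Vt n k c) = n*(k+1)+c := card_Vt (by omega)
  have hQ : (pendantCycle n (Kf n k c)).edgeSet.ncard = n*(k+1)+c := by
    rw [← range_Ei hn3, ← Set.image_univ, Set.ncard_image_of_injective _ (Ei_inj hn3),
      Set.ncard_univ, Nat.card_eq_fintype_card, hP]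
  refine ⟨?_, ?_, ?_⟩
  · rw [hP]
    exact bijOn_nat _ 1 (n*(k+1)+c) (fv_inj hm)
      (fun v => Finset.mem_Icc.mpr ⟨(fv_mem hm v).1, (fv_mem hm v).2⟩) (by rw [hP]; omega)
  · rw [hP, hQ, ← range_Ei hn3]
    apply bijOn_range
    have hfe : (fes n k c m) ∘ (Ei n k c) = fun v => 2*(n*(k+1)+c) + m + 2 - esum n k c m v := by
      funext v
      show fes n k c m (Ei n k c v) = _
      rw [fes, esum_eq hm v]
    rw [hfe]
    apply bijOn_nat
    · intro u v huv
      have hu := esum_mem hm hm1 hc u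
      have hv := esum_mem hm hm1 hc v
      have huv' : 2*(n*(k+1)+c) + m + 2 - esum n k c m u
          = 2*(n*(k+1)+c) + m + 2 - esum n k c m v := huv
      apply esum_inj hm hm1
      generalize n*(k+1) = B at huv' hu hv
      omega
    · intro v
      have hv := esum_mem hm hm1 hc v
      apply Finset.mem_Icc.mpr
      constructor <;> (generalize n*(k+1) = B at hv ⊢; omega)
    · rw [hP]
      generalize n*(k+1) = B
      omega
  · intro u v _
    have hu := fv_mem hm u
    have hv := fv_mem hm v
    show fv n k c m u + fv n k c m v +
        (2*(n*(k+1)+c) + m + 2 - (fv n k c m u + fv n k c m v)) = 2*(n*(k+1)+c) + m + 2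
    generalize n*(k+1) = B at hu hv ⊢
    omega


lemma gauss : ∀ q : ℕ, (∑ x ∈ Finset.Icc 1 q, x) * 2 = q * (q+1) := by
  intro q
  induction q with
  | zero => simp
  | succ t ih =>
    rw [Finset.sum_Icc_succ_top (by omega)]
    nlinarith [ih]

lemma gauss_shift (p q : ℕ) :
    ∑ x ∈ Finset.Icc (p+1) (p+q), x = p * q + ∑ x ∈ Finset.Icc 1 q, x := by
  rw [← Finset.map_add_left_Icc 1 q p, Finset.sum_map]
  simp only [addLeftEmbedding_apply]
  rw [Finset.sum_add_distrib, Finset.sum_const, Nat.card_Icc, smul_eq_mul]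
  rw [Nat.add_sub_cancel, Nat.mul_comm]

lemma sum_bijOn_Icc {α : Type*} (s : Finset α) (f : α → ℕ) (lo hi : ℕ)
    (h : Set.BijOn f ↑s (Set.Icc lo hi)) : ∑ a ∈ s, f a = ∑ x ∈ Finset.Icc lo hi, x := by
  apply Finset.sum_bij (fun a _ => f a)
  · intro a ha
    rw [Finset.mem_Icc]
    exact h.mapsTo (Finset.mem_coe.mpr ha)
  · intro a ha b hb hab
    exact h.injOn (Finset.mem_coe.mpr ha) (Finset.mem_coe.mpr hb) hab
  · intro x hx
    obtain ⟨a, ha, rfl⟩ := h.surjOn (by rw [← Finset.coe_Icc]; exact hx)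
    exact ⟨a, Finset.mem_coe.mp ha, rfl⟩
  · intros; rfl

lemma lower (hn3 : 3 ≤ n) (hm : n = 2*m+1) (hm1 : 1 ≤ m) (hc : 1 ≤ c)
    (hub : c * (n - 3) < 2 * n * (k + 1))
    (fv' : Vt n k c → ℕ) (fe' : Sym2 (Vt n k c) → ℕ) (cf : ℕ)
    (h : IsSEMT (pendantCycle n (Kf n k c)) fv' fe' cf) :
    2*(n*(k+1)+c) + m + 2 ≤ cf := by
  obtain ⟨hbv, hbe, hmag⟩ := h
  have hn1 : 1 ≤ n := by omega
  haveI : NeZero n := ⟨by omega⟩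
  set q := n*(k+1)+c with hq
  have hP : Fintype.card (Vt n k c) = q := card_Vt hn1
  have hQ : (pendantCycle n (Kf n k c)).edgeSet.ncard = q := by
    rw [← range_Ei hn3, ← Set.image_univ, Set.ncard_image_of_injective _ (Ei_inj hn3),
      Set.ncard_univ, Nat.card_eq_fintype_card, hP]
  rw [hP] at hbv
  rw [hP, hQ] at hbe
  have hfvmem : ∀ v, 1 ≤ fv' v ∧ fv' v ≤ q := fun v =>
    Set.mem_Icc.mp (hbv.mapsTo (Set.mem_univ v))
  have hEinj : Function.Injective (Ei n k c) := Ei_inj hn3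
  set A : Fin n → ℕ := fun i => fv' (Sum.inl i) with hA
  set SA := ∑ i : Fin n, A i with hSAdef
  set SP := ∑ x : Σ i : Fin n, Fin (Kf n k c i), fv' (Sum.inr x) with hSPdef
  set SKA := ∑ i : Fin n, Kf n k c i * A i with hSKAdef
  set SI := ∑ x ∈ Finset.Icc 1 q, x with hSIdef
  have e5 : SA + SP = SI := by
    rw [hSAdef, hSPdef, hSIdef, ← Fintype.sum_sum_type (fun v => fv' v)]
    exact sum_bijOn_Icc Finset.univ fv' 1 q (by rw [Finset.coe_univ]; exact hbv)
  set SFe := ∑ v : Vt n k c, fe' (Ei n k c v) with hSFedef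
  have e2 : SFe = q*q + SI := by
    rw [hSFedef]
    have h1 : ∑ v : Vt n k c, fe' (Ei n k c v) = ∑ e ∈ Finset.univ.image (Ei n k c), fe' e :=
      (Finset.sum_image (fun x _ y _ hxy => hEinj hxy)).symm
    have h2 : ((Finset.univ.image (Ei n k c) : Finset (Sym2 (Vt n k c))) : Set (Sym2 (Vt n k c)))
        = (pendantCycle n (Kf n k c)).edgeSet := by
      rw [Finset.coe_image, Finset.coe_univ, Set.image_univ, range_Ei hn3]
    rw [h1, sum_bijOn_Icc _ fe' (q+1) (q+q) (by rw [h2]; exact hbe), gauss_shift q q]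
  have e3 : SI * 2 = q * (q+1) := gauss q
  set T := ∑ v : Vt n k c,
      Sym2.lift ⟨fun u w => fv' u + fv' w, fun u w => Nat.add_comm _ _⟩ (Ei n k c v) with hTdef
  have e4 : T = 2*SA + SP + SKA := by
    rw [hTdef, Fintype.sum_sum_type]
    have p1 : ∀ a : Fin n,
        Sym2.lift ⟨fun u w => fv' u + fv' w, fun u w => Nat.add_comm _ _⟩ (Ei n k c (Sum.inl a))
          = A a + A (a + 1) := by
      intro a
      have hsucc : (⟨(a.val+1)%n, Nat.mod_lt _ a.pos⟩ : Fin n) = a + 1 := by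
        apply Fin.ext
        rw [Fin.add_def, Fin.val_one' n, Nat.mod_eq_of_lt (show 1 < n by omega)]
      simp only [Ei, Sym2.lift_mk]
      rw [hsucc]
    have p2 : ∀ x : Σ i : Fin n, Fin (Kf n k c i),
        Sym2.lift ⟨fun u w => fv' u + fv' w, fun u w => Nat.add_comm _ _⟩ (Ei n k c (Sum.inr x))
          = fv' (Sum.inr x) + A x.1 := by
      rintro ⟨i, j⟩
      simp only [Ei, Sym2.lift_mk]
      rfl
    rw [Finset.sum_congr rfl (fun a _ => p1 a), Finset.sum_congr rfl (fun x _ => p2 x)]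
    rw [Finset.sum_add_distrib, Finset.sum_add_distrib]
    have prot : ∑ a : Fin n, A (a + 1) = SA := by
      rw [hSAdef]
      exact Equiv.sum_comp (Equiv.addRight (1 : Fin n)) A
    have psig : ∑ x : Σ i : Fin n, Fin (Kf n k c i), A x.1 = SKA := by
      rw [hSKAdef, ← Finset.univ_sigma_univ, Finset.sum_sigma]
      apply Finset.sum_congr rfl
      intro i _
      simp [mul_comm]
    rw [prot, psig]
    ring
  have e1 : T + SFe = q * cf := by
    rw [hTdef, hSFedef, ← Finset.sum_add_distrib]
    have hterm : ∀ v : Vt n k c,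
        Sym2.lift ⟨fun u w => fv' u + fv' w, fun u w => Nat.add_comm _ _⟩ (Ei n k c v)
          + fe' (Ei n k c v) = cf := by
      intro v
      rcases v with a | ⟨i, j⟩
      · have h1 := hmag _ _ (adj_cyc (k := k) (c := c) hn3 a)
        simp only [Ei, Sym2.lift_mk]
        exact h1
      · have h1 := hmag _ _ (adj_pend i j)
        simp only [Ei, Sym2.lift_mk]
        exact h1
    rw [Finset.sum_congr rfl (fun v _ => hterm v), Finset.sum_const, Finset.card_univ, hP,
      smul_eq_mul]
  have e7 : n*(n+1) ≤ 2*SA := by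
    have hAinj : Function.Injective A := fun a b hab =>
      Sum.inl.inj (hbv.injOn (Set.mem_univ _) (Set.mem_univ _) hab)
    have hcardim : (Finset.univ.image A).card = n := by
      rw [Finset.card_image_of_injective _ hAinj, Finset.card_univ, Fintype.card_fin]
    have hmem : ∀ x ∈ Finset.univ.image A, 1 ≤ x := by
      intro x hx
      obtain ⟨i, _, rfl⟩ := Finset.mem_image.mp hx
      exact (hfvmem _).1
    have h1 := sum_distinct_ge n (Finset.univ.image A) hcardim hmem
    have h2 : ∑ x ∈ Finset.univ.image A, x = SA :=
      Finset.sum_image (fun x _ y _ hxy => hAinj hxy)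
    omega
  have e6 : k*SA + c ≤ SKA := by
    have hsp : ∀ i : Fin n, Kf n k c i * A i
        = k * A i + (if i.val = n-1 then c else 0) * A i := by
      intro i
      by_cases hi : i.val = n - 1
      · simp only [Kf, if_pos hi]
        ring
      · simp only [Kf, if_neg hi]
        ring
    rw [hSKAdef, Finset.sum_congr rfl (fun i _ => hsp i), Finset.sum_add_distrib,
      ← Finset.mul_sum, ← hSAdef]
    have hlst : c ≤ ∑ i : Fin n, (if i.val = n-1 then c else 0) * A i := by
      set lst : Fin n := ⟨n-1, by omega⟩ with hlstdef
      have h1 := Finset.single_le_sum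
        (f := fun i : Fin n => (if i.val = n-1 then c else 0) * A i)
        (fun i _ => Nat.zero_le _) (Finset.mem_univ lst)
      have h1' : c * A lst ≤ ∑ i : Fin n, (if i.val = n-1 then c else 0) * A i := by
        have hv : (fun i : Fin n => (if i.val = n-1 then c else 0) * A i) lst = c * A lst := by
          show (if (n-1 : ℕ) = n - 1 then c else 0) * A lst = c * A lst
          rw [if_pos rfl]
        rw [← hv]
        exact h1
      have h2 : c * 1 ≤ c * A lst := Nat.mul_le_mul_left c (hfvmem _).1
      omega
    omega
  by_contra hcon
  push_neg at hcon
  have hqcf : q*cf ≤ 2*(q*q) + q*m + q := by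
    calc q*cf ≤ q*(2*q+m+1) := Nat.mul_le_mul_left q (by omega)
    _ = 2*(q*q) + q*m + q := by ring
  have hkSA : (k+1)*(n*(n+1)) ≤ 2*(k*SA) + 2*SA := by
    calc (k+1)*(n*(n+1)) ≤ (k+1)*(2*SA) := Nat.mul_le_mul_left _ e7
    _ = 2*(k*SA) + 2*SA := by ring
  have key : (k+1)*(n*(n+1)) + 2*c ≤ 2*(q*m) := by nlinarith [e1, e2, e3, e4, e5, e6, hqcf, hkSA]
  obtain ⟨t, rfl⟩ : ∃ t, m = t + 1 := ⟨m-1, by omega⟩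
  have e8 : (k+1)*(n*(n+1)) = 2*((n*(k+1))*(t+1)) + 2*(n*(k+1)) := by rw [hm]; ring
  have e9 : 2*(q*(t+1)) = 2*((n*(k+1))*(t+1)) + (c*(2*t) + 2*c) := by rw [hq]; ring
  rw [e8, e9] at key
  have hub2 : c*(2*t) < 2*(n*(k+1)) := by
    have h3 : n - 3 = 2*t := by omega
    rw [h3] at hub
    calc c*(2*t) < 2*n*(k+1) := hub
    _ = 2*(n*(k+1)) := by ring
  generalize (n*(k+1))*(t+1) = P at key
  generalize n*(k+1) = B at key hub2
  generalize c*(2*t) = Ct at key hub2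
  omega

end PCaux

/-- `G_{n,k,c}`: odd cycle `a₁,…,aₙ` with `k` pendants at `a₁,…,a_{n-1}` and `k+c` pendants at
`aₙ`. For `1 ≤ c < 2n(k+1)/(n-3)` (i.e. `c(n-3) < 2n(k+1)`; no constraint when `n = 3`),
it is super edge-magic total with strength `2n(k+1) + 2c + (n+3)/2`. -/
theorem stmt_9 (n k c : ℕ) (hn : 3 ≤ n) (ho : Odd n) (hc : 1 ≤ c)
    (hub : c * (n - 3) < 2 * n * (k + 1)) :
    (∃ fv fe cf,
        IsSEMT (pendantCycle n (fun i => if i.val = n - 1 then k + c else k)) fv fe cf) ∧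
    sInf {cf | ∃ fv fe,
        IsSEMT (pendantCycle n (fun i => if i.val = n - 1 then k + c else k)) fv fe cf} =
      2 * n * (k + 1) + 2 * c + (n + 3) / 2 := by
  obtain ⟨m, hm0⟩ := ho
  have hm : n = 2*m+1 := by omega
  have hm1 : 1 ≤ m := by omega
  have hcf : 2 * n * (k + 1) + 2 * c + (n + 3) / 2 = 2*(n*(k+1)+c) + m + 2 := by
    have h2 : (n + 3) / 2 = m + 2 := by omega
    rw [h2]
    ring
  have hcons := PCaux.construction (n := n) (k := k) (c := c) (m := m) hn hm hm1 hc
  constructor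
  · exact ⟨_, _, _, hcons⟩
  · rw [hcf]
    apply le_antisymm
    · exact Nat.sInf_le ⟨_, _, hcons⟩
    · exact le_csInf ⟨_, _, _, hcons⟩ (fun b hb => by
        obtain ⟨fv', fe', hb⟩ := hb
        exact PCaux.lower hn hm hm1 hc hub fv' fe' b hb)
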